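/- Let E_U be an MFCE-relation on 𝔄 = 𝔄(I), define Ẽ_U by a Ẽ_U b iff a = b or (a E_U b and the E_U-class of a contains a ghost), let w : I →₀ ℕ be a monomial with exponents r_i := w(i), and set E_w := Ẽ_U ∨ ⋁_{i∈I} Eq(x_i^{r_i+1}, c^{r_i+1}) (where x_i^{r_i+1} denotes the monomial with exponent r_i+1 at i and 0 elsewhere, and c^{r_i+1} = e·x_i^{r_i+1}). Then: (1) the ⋁_{i∈I} Eq(x_i^{r_i+1}, c^{r_i+1})-classes containing no ghost are exactly the singletons {z} for monomials z ≤ w, so the quotient A_w has exactly ∏_{i∈supp w}(r_i+1) tangible elements; (2) the E_w-classes containing no ghost are exactly the singletons {z} for monomials z with z ≤ w whose E_U-class contains no ghost; in particular the quotient U_w := 𝔄/E_w has finitely many tangible elements and has unique tangible factorization. -/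

import Mathlib

/-- The supertropical monoid `𝔄(I)` over `M = {cᵏ : k ∈ ℕ} ∪ {0}`: its tangible
elements are the monomials in commuting variables `(x_i)_{i ∈ I}`, identified with
finitely supported exponent vectors `I →₀ ℕ`; its ghosts are `gh k = cᵏ` and
`zero`. -/
inductive STA (I : Type) : Type where
  | tang : (I →₀ ℕ) → STA I
  | gh : ℕ → STA I
  | zero : STA I

namespace STA

variable {I : Type}

/-- The degree of a monomial. -/
def deg (z : I →₀ ℕ) : ℕ := z.sum fun _ n => n

/-- Multiplication in `𝔄(I)`: monomials multiply among themselves,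
`cᵏ · z = c^(k + deg z)`, ghosts multiply in `M`, and `0` is absorbing. -/
noncomputable def mul : STA I → STA I → STA I
  | zero, _ => zero
  | _, zero => zero
  | tang z, tang w => tang (z + w)
  | tang z, gh k => gh (deg z + k)
  | gh k, tang w => gh (k + deg w)
  | gh k, gh l => gh (k + l)

/-- The ghost elements of `𝔄(I)` (the elements of `M`). -/
def isGhost : STA I → Prop
  | tang _ => False
  | gh _ => True
  | zero => True

/-- The ghost map `a ↦ e·a` (`e = gh 0 = c⁰`). -/
noncomputable def nu : STA I → STA I := fun a => mul (gh 0) a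

/-- A relation is multiplicative. -/
def Mult (E : STA I → STA I → Prop) : Prop :=
  ∀ a b d : STA I, E a b → E (mul a d) (mul b d)

/-- An MFCE-relation on `𝔄(I)`: a multiplicative, fiber conserving equivalence
relation. -/
def MFCE (E : STA I → STA I → Prop) : Prop :=
  Equivalence E ∧ Mult E ∧ ∀ a b : STA I, E a b → nu a = nu b

/-- The smallest multiplicative equivalence relation containing `R`; for `R`
relating the elements of a set `S` (of equal ghost value) this is `Eq(S)`, and
applied to unions it yields joins `⋁` in the lattice of MFCE-relations. -/
def mgen (R : STA I → STA I → Prop) : STA I → STA I → Prop :=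
  fun a b => ∀ E : STA I → STA I → Prop,
    Equivalence E → Mult E → (∀ x y : STA I, R x y → E x y) → E a b

/-- The `E`-class of `a` contains no ghost (i.e. is a tangible class). -/
def GhostFree (E : STA I → STA I → Prop) (a : STA I) : Prop :=
  ¬ ∃ g : STA I, isGhost g ∧ E a g

/-- The relation `Ẽ_U`: `a Ẽ_U b` iff `a = b`, or `a E_U b` and the `E_U`-class of
`a` contains a ghost. -/
def tilde (EU : STA I → STA I → Prop) : STA I → STA I → Prop :=
  fun a b => a = b ∨ (EU a b ∧ ¬ GhostFree EU a)

end STA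

section Aux

namespace STA

variable {I : Type}

lemma deg_add (z z' : I →₀ ℕ) : deg (z + z') = deg z + deg z' := by
  unfold deg
  exact Finsupp.sum_add_index' (fun _ => rfl) (fun _ _ _ => rfl)

lemma deg_single (i : I) (n : ℕ) : deg (Finsupp.single i n) = n :=
  Finsupp.sum_single_index rfl

lemma nu_mul (a d : STA I) : nu (mul a d) = mul (nu a) (nu d) := by
  cases a <;> cases d <;> simp [mul, nu, deg_add]

lemma mgen_of {R : STA I → STA I → Prop} {a b : STA I} (h : R a b) : mgen R a b :=
  fun _ _ _ hr => hr _ _ h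

lemma mgen_refl (R : STA I → STA I → Prop) (a : STA I) : mgen R a a :=
  fun _ he _ _ => he.refl a

lemma mgen_mult (R : STA I → STA I → Prop) : Mult (mgen R) :=
  fun a b d h E he hm hr => hm a b d (h E he hm hr)

lemma mgen_le {R E : STA I → STA I → Prop} (he : Equivalence E) (hm : Mult E)
    (hr : ∀ x y, R x y → E x y) {a b : STA I} (h : mgen R a b) : E a b :=
  h E he hm hr

/-- A model relation: `a` and `b` are related iff they are equal, or both are
"bad" (not `good`) and have the same ghost value. -/
def Rel (good : STA I → Prop) (a b : STA I) : Prop :=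
  a = b ∨ (nu a = nu b ∧ ¬ good a ∧ ¬ good b)

lemma Rel_equiv (good : STA I → Prop) : Equivalence (Rel good) := by
  constructor
  · intro a; exact Or.inl rfl
  · rintro a b (rfl | ⟨h1, h2, h3⟩)
    · exact Or.inl rfl
    · exact Or.inr ⟨h1.symm, h3, h2⟩
  · rintro a b c (rfl | ⟨h1, h2, h3⟩) h
    · exact h
    · rcases h with rfl | ⟨g1, g2, g3⟩
      · exact Or.inr ⟨h1, h2, h3⟩
      · exact Or.inr ⟨h1.trans g1, h2, g3⟩

lemma Rel_mult {good : STA I → Prop}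
    (hcl : ∀ a d : STA I, ¬ good a → ¬ good (mul a d)) : Mult (Rel good) := by
  rintro a b d (rfl | ⟨h1, h2, h3⟩)
  · exact Or.inl rfl
  · exact Or.inr ⟨by rw [nu_mul, nu_mul, h1], hcl a d h2, hcl b d h3⟩

lemma ghost_mul_ghost {g d : STA I} (hg : isGhost g) : isGhost (mul g d) := by
  cases g <;> cases d <;> simp_all [isGhost, mul]

/-- If `z ≰ w` then the monomial `z` is related by `Fw` (hence also by `Ew`) to a
ghost, as soon as the generating relation contains the pairs
`(x_i^{w i + 1}, c^{w i + 1})`. -/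
lemma tang_rel_ghost {w z : I →₀ ℕ} (hz : ¬ z ≤ w)
    {R : STA I → STA I → Prop}
    (hgen : ∀ i : I, R (tang (Finsupp.single i (w i + 1))) (gh (w i + 1))) :
    ∃ g : STA I, isGhost g ∧ mgen R (tang z) g := by
  rw [Finsupp.le_def] at hz
  push_neg at hz
  obtain ⟨i, hi⟩ := hz
  have hle : Finsupp.single i (w i + 1) ≤ z := Finsupp.single_le_iff.2 hi
  set z' := z - Finsupp.single i (w i + 1) with hz'
  have hsum : Finsupp.single i (w i + 1) + z' = z := add_tsub_cancel_of_le hle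
  have := mgen_mult R _ _ (tang z') (mgen_of (hgen i))
  rw [show mul (tang (Finsupp.single i (w i + 1))) (tang z')
        = tang (Finsupp.single i (w i + 1) + z') from rfl, hsum] at this
  exact ⟨mul (gh (w i + 1)) (tang z'), trivial, this⟩

end STA

end Aux

/-- Let `E_U` be an MFCE-relation on `𝔄(I)`, `w` a monomial, and
`F_w = ⋁_i Eq(x_i^{w i + 1}, c^{w i + 1})`, `E_w = Ẽ_U ∨ F_w`.  Then: (1) the
ghost-free `F_w`-classes are exactly the singletons `{z}` for monomials `z ≤ w`,
and `A_w = 𝔄/F_w` has exactly `∏_{i ∈ supp w} (w i + 1)` tangible elements;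
(2) the ghost-free `E_w`-classes are exactly the singletons `{z}` for monomials
`z ≤ w` whose `E_U`-class contains no ghost; in particular `U_w = 𝔄/E_w` has
finitely many tangibles and unique tangible factorization. -/


theorem stmt17 {I : Type} (EU : STA I → STA I → Prop) (hEU : STA.MFCE EU)
    (w : I →₀ ℕ)
    (Fw : STA I → STA I → Prop)
    (hFw : Fw = STA.mgen (fun a b : STA I => ∃ i : I,
      a = STA.tang (Finsupp.single i (w i + 1)) ∧ b = STA.gh (w i + 1)))
    (Ew : STA I → STA I → Prop)
    (hEw : Ew = STA.mgen (fun a b : STA I => STA.tilde EU a b ∨ ∃ i : I,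
      a = STA.tang (Finsupp.single i (w i + 1)) ∧ b = STA.gh (w i + 1))) :
    ((∀ a : STA I, STA.GhostFree Fw a ↔ ∃ z : I →₀ ℕ, z ≤ w ∧ a = STA.tang z) ∧
     (∀ z : I →₀ ℕ, z ≤ w → ∀ b : STA I, Fw (STA.tang z) b → b = STA.tang z) ∧
     {a : STA I | STA.GhostFree Fw a}.ncard = ∏ i ∈ w.support, (w i + 1)) ∧
    ((∀ a : STA I, STA.GhostFree Ew a ↔
        ∃ z : I →₀ ℕ, z ≤ w ∧ a = STA.tang z ∧ STA.GhostFree EU (STA.tang z)) ∧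
     (∀ a : STA I, STA.GhostFree Ew a → ∀ b : STA I, Ew a b → b = a) ∧
     {a : STA I | STA.GhostFree Ew a}.Finite) := by
    classical
  subst hFw hEw
  set G : STA I → STA I → Prop := fun a b : STA I => ∃ i : I,
      a = STA.tang (Finsupp.single i (w i + 1)) ∧ b = STA.gh (w i + 1) with hG
  set GE : STA I → STA I → Prop := fun a b : STA I => STA.tilde EU a b ∨ G a b with hGE
  -- the "good" (tangible-singleton-candidate) elements
  set goodF : STA I → Prop := fun a => ∃ z : I →₀ ℕ, z ≤ w ∧ a = STA.tang z with hgoodF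
  set goodE : STA I → Prop := fun a => ∃ z : I →₀ ℕ, z ≤ w ∧ a = STA.tang z ∧
      STA.GhostFree EU (STA.tang z) with hgoodE
  have hsingle_not_le : ∀ i : I, ¬ Finsupp.single i (w i + 1) ≤ w := by
    intro i h
    have := Finsupp.single_le_iff.1 h
    omega
  have hclF : ∀ a d : STA I, ¬ goodF a → ¬ goodF (STA.mul a d) := by
    rintro a d ha ⟨u, hu, heq⟩
    cases a <;> cases d <;> simp [STA.mul] at heq
    case tang.tang z z' =>
      exact ha ⟨z, le_trans le_self_add (heq ▸ hu), rfl⟩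
  have hclE : ∀ a d : STA I, ¬ goodE a → ¬ goodE (STA.mul a d) := by
    rintro a d ha ⟨u, hu, heq, hGFu⟩
    cases a <;> cases d <;> simp [STA.mul] at heq
    case tang.tang z z' =>
      have hz : z ≤ w := le_trans le_self_add (heq ▸ hu)
      refine ha ⟨z, hz, rfl, ?_⟩
      rintro ⟨g, hg, hrel⟩
      refine hGFu ⟨STA.mul g (STA.tang z'), STA.ghost_mul_ghost hg, ?_⟩
      have := hEU.2.1 _ _ (STA.tang z') hrel
      rwa [show STA.mul (STA.tang z) (STA.tang z') = STA.tang u by simp [STA.mul, heq]] at this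
  have hgenF : ∀ x y : STA I, G x y → STA.Rel goodF x y := by
    rintro x y ⟨i, rfl, rfl⟩
    refine Or.inr ⟨by simp only [STA.nu, STA.mul, STA.deg_single], ?_, ?_⟩
    · rintro ⟨z, hz, hzeq⟩
      rw [STA.tang.injEq] at hzeq
      exact hsingle_not_le i (hzeq ▸ hz)
    · rintro ⟨z, hz, hzeq⟩; exact nomatch hzeq
  have hgenE : ∀ x y : STA I, GE x y → STA.Rel goodE x y := by
    rintro x y (h | ⟨i, rfl, rfl⟩)
    · rcases h with rfl | ⟨hxy, hngf⟩
      · exact Or.inl rfl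
      · refine Or.inr ⟨hEU.2.2 _ _ hxy, ?_, ?_⟩
        · rintro ⟨z, hz, rfl, hGF⟩; exact hngf hGF
        · rintro ⟨z, hz, rfl, hGF⟩
          obtain ⟨g, hg, hxg⟩ := not_not.1 (fun h => hngf h)
          exact hGF ⟨g, hg, hEU.1.trans (hEU.1.symm hxy) hxg⟩
    · refine Or.inr ⟨by simp only [STA.nu, STA.mul, STA.deg_single], ?_, ?_⟩
      · rintro ⟨z, hz, hzeq, -⟩
        rw [STA.tang.injEq] at hzeq
        exact hsingle_not_le i (hzeq ▸ hz)
      · rintro ⟨z, hz, hzeq, -⟩; exact nomatch hzeq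
  have hFle : ∀ a b : STA I, STA.mgen G a b → STA.Rel goodF a b :=
    fun a b h => STA.mgen_le (STA.Rel_equiv _) (STA.Rel_mult hclF) hgenF h
  have hEle : ∀ a b : STA I, STA.mgen GE a b → STA.Rel goodE a b :=
    fun a b h => STA.mgen_le (STA.Rel_equiv _) (STA.Rel_mult hclE) hgenE h
  -- singleton properties
  have hsingF : ∀ z : I →₀ ℕ, z ≤ w → ∀ b : STA I, STA.mgen G (STA.tang z) b →
      b = STA.tang z := by
    intro z hz b hb
    rcases hFle _ _ hb with h | ⟨-, h2, -⟩
    · exact h.symm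
    · exact absurd ⟨z, hz, rfl⟩ h2
  have hsingE : ∀ a : STA I, goodE a → ∀ b : STA I, STA.mgen GE a b → b = a := by
    intro a ha b hb
    rcases hEle _ _ hb with h | ⟨-, h2, -⟩
    · exact h.symm
    · exact absurd ha h2
  -- characterization of ghost-free elements for Fw
  have hGFF : ∀ a : STA I, STA.GhostFree (STA.mgen G) a ↔ goodF a := by
    intro a
    constructor
    · intro hgf
      by_contra hng
      cases a with
      | tang z =>
        have hz : ¬ z ≤ w := fun h => hng ⟨z, h, rfl⟩
        exact hgf (STA.tang_rel_ghost hz fun i => ⟨i, rfl, rfl⟩)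
      | gh k => exact hgf ⟨STA.gh k, trivial, STA.mgen_refl _ _⟩
      | zero => exact hgf ⟨STA.zero, trivial, STA.mgen_refl _ _⟩
    · rintro ⟨z, hz, rfl⟩ ⟨g, hg, hrel⟩
      have := hsingF z hz g hrel
      subst this
      exact hg
  have hGFE : ∀ a : STA I, STA.GhostFree (STA.mgen GE) a ↔ goodE a := by
    intro a
    constructor
    · intro hgf
      by_contra hng
      cases a with
      | tang z =>
        by_cases hz : z ≤ w
        · have hngf : ¬ STA.GhostFree EU (STA.tang z) := fun h => hng ⟨z, hz, rfl, h⟩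
          obtain ⟨g, hg, hrel⟩ := not_not.1 hngf
          exact hgf ⟨g, hg, STA.mgen_of (Or.inl (Or.inr ⟨hrel, hngf⟩))⟩
        · obtain ⟨g, hg, hrel⟩ := STA.tang_rel_ghost (w := w) hz
            (R := GE) fun i => Or.inr ⟨i, rfl, rfl⟩
          exact hgf ⟨g, hg, hrel⟩
      | gh k => exact hgf ⟨STA.gh k, trivial, STA.mgen_refl _ _⟩
      | zero => exact hgf ⟨STA.zero, trivial, STA.mgen_refl _ _⟩
    · intro ha ⟨g, hg, hrel⟩
      have := hsingE a ha g hrel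
      subst this
      obtain ⟨z, hz, rfl, -⟩ := ha
      exact hg
  -- counting
  have himg : {a : STA I | STA.GhostFree (STA.mgen G) a}
      = STA.tang '' ↑(Finset.Iic w) := by
    ext a
    simp only [Set.mem_setOf_eq, hGFF, Set.mem_image, Finset.coe_Iic, Set.mem_Iic]
    constructor
    · rintro ⟨z, hz, rfl⟩; exact ⟨z, hz, rfl⟩
    · rintro ⟨z, hz, rfl⟩; exact ⟨z, hz, rfl⟩
  have htanginj : Function.Injective (STA.tang (I := I)) := by
    intro a b h; rwa [STA.tang.injEq] at h
  refine ⟨⟨fun a => (hGFF a), hsingF, ?_⟩, ⟨fun a => (hGFE a), ?_, ?_⟩⟩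
  · rw [himg, Set.ncard_image_of_injective _ htanginj, Set.ncard_coe_finset,
      Finsupp.card_Iic]
    exact Finset.prod_congr rfl fun i _ => Nat.card_Iic _
  · intro a ha b hb
    exact hsingE a ((hGFE a).1 ha) b hb
  · refine Set.Finite.subset ((Finset.Iic w : Finset (I →₀ ℕ)).finite_toSet.image STA.tang) ?_
    intro a ha
    obtain ⟨z, hz, rfl, -⟩ := (hGFE a).1 ha
    exact ⟨z, by simpa using hz, rfl⟩
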